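/- Assume Φ and ω are compatible and X = {x_1,…,x_n} is a sampling set for Φ. For any data y ∈ ℝⁿ, any p ≥ p_X, and any 2 ≤ q ≤ ∞, the minimum weighted norm interpolants satisfy the quantitative bound ‖f_p − f_∞‖_{L^q_μ(Ω)} ≤ C_K^{1−1/q} (sup_{k≥1} ω_k⁻¹)^{1/q} n^{3/2} α_p ‖𝐊_p⁻¹‖₂ ‖𝐊⁻¹‖₂ ‖y‖₂ + α_p^{1−1/q} (sup_{k>p} ω_k⁻¹)^{1/q} n^{1/2} ‖𝐊_p⁻¹‖₂ ‖y‖₂, where ‖·‖₂ denotes the spectral norm of a matrix and the Euclidean norm of a vector. -/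

import Mathlib

open MeasureTheory Filter Finset Matrix Topology
open scoped ENNReal BigOperators
set_option linter.unusedSectionVars false
set_option maxHeartbeats 1000000

noncomputable section

/-- Truncated kernel `K_p(x,y) = ∑_{k<p} ω_k⁻¹ φ_k(x) φ_k(y)`. -/
def Kpart {Ω : Type*} (ω : ℕ → ℝ) (φ : ℕ → Ω → ℝ) (p : ℕ) (x y : Ω) : ℝ :=
  ∑ k ∈ Finset.range p, (ω k)⁻¹ * φ k x * φ k y

/-- The matrix `𝐊_p = (K_p(x_i,x_j))`. -/
def KpartMat {Ω : Type*} (ω : ℕ → ℝ) (φ : ℕ → Ω → ℝ) {n : ℕ} (X : Fin n → Ω) (p : ℕ) :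
    Matrix (Fin n) (Fin n) ℝ :=
  Matrix.of fun i j => Kpart ω φ p (X i) (X j)

/-- The matrix `𝐊 = (K(x_i,x_j))`. -/
def KMat {Ω : Type*} (K : Ω → Ω → ℝ) {n : ℕ} (X : Fin n → Ω) : Matrix (Fin n) (Fin n) ℝ :=
  Matrix.of fun i j => K (X i) (X j)

/-- The minimum weighted norm interpolant `f_p(x) = ∑_k K_p(x,x_k) (𝐊_p⁻¹ y)_k`. -/
def interpP {Ω : Type*} (ω : ℕ → ℝ) (φ : ℕ → Ω → ℝ) {n : ℕ} (X : Fin n → Ω)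
    (y : Fin n → ℝ) (p : ℕ) (x : Ω) : ℝ :=
  ∑ j, Kpart ω φ p x (X j) * ((KpartMat ω φ X p)⁻¹ *ᵥ y) j

/-- The limiting interpolant `f_∞(x) = ∑_k K(x,x_k) (𝐊⁻¹ y)_k`. -/
def interpInf {Ω : Type*} (K : Ω → Ω → ℝ) {n : ℕ} (X : Fin n → Ω)
    (y : Fin n → ℝ) (x : Ω) : ℝ :=
  ∑ j, K x (X j) * ((KMat K X)⁻¹ *ᵥ y) j

/-- Spectral (`ℓ²→ℓ²` operator) norm of a real square matrix. -/
def specNorm {n : ℕ} (A : Matrix (Fin n) (Fin n) ℝ) : ℝ :=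
  ‖Matrix.toEuclideanCLM (𝕜 := ℝ) A‖

/-- Euclidean norm of a vector. -/
def vecNorm {n : ℕ} (y : Fin n → ℝ) : ℝ :=
  Real.sqrt (∑ j, (y j) ^ 2)

/-- `α_p := sup_{x,y ∈ Ω} |K(x,y) − K_p(x,y)|`. -/
def alphaP {Ω : Type*} (K : Ω → Ω → ℝ) (ω : ℕ → ℝ) (φ : ℕ → Ω → ℝ) (p : ℕ) : ℝ :=
  ⨆ z : Ω × Ω, |K z.1 z.2 - Kpart ω φ p z.1 z.2|

/-- `C_K := sup_{x ∈ Ω} K(x,x)`. -/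
def CK {Ω : Type*} (K : Ω → Ω → ℝ) : ℝ :=
  ⨆ x : Ω, K x x




lemma vecNorm_nonneg {n : ℕ} (v : Fin n → ℝ) : 0 ≤ vecNorm v := Real.sqrt_nonneg _
lemma specNorm_nonneg {n : ℕ} (A : Matrix (Fin n) (Fin n) ℝ) : 0 ≤ specNorm A := norm_nonneg _

lemma vecNorm_eq_norm {n : ℕ} (v : Fin n → ℝ) :
    vecNorm v = ‖(WithLp.equiv 2 (Fin n → ℝ)).symm v‖ := by
  rw [EuclideanSpace.norm_eq]
  simp [vecNorm, Real.norm_eq_abs, sq_abs]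

lemma vecNorm_mulVec_le {n : ℕ} (A : Matrix (Fin n) (Fin n) ℝ) (v : Fin n → ℝ) :
    vecNorm (A *ᵥ v) ≤ specNorm A * vecNorm v := by
  rw [vecNorm_eq_norm, vecNorm_eq_norm]
  have h : (WithLp.equiv 2 (Fin n → ℝ)).symm (A *ᵥ v)
      = Matrix.toEuclideanCLM (𝕜 := ℝ) A ((WithLp.equiv 2 (Fin n → ℝ)).symm v) := by
    rfl
  rw [h]
  exact ContinuousLinearMap.le_opNorm _ _

lemma sum_abs_le_sqrt_mul_vecNorm {n : ℕ} (v : Fin n → ℝ) :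
    ∑ j, |v j| ≤ Real.sqrt n * vecNorm v := by
  have h := Finset.sum_mul_sq_le_sq_mul_sq Finset.univ (fun _ => (1:ℝ)) (fun j => |v j|)
  simp only [one_mul, one_pow, sq_abs, Finset.sum_const, Finset.card_univ, Fintype.card_fin,
    nsmul_eq_mul, mul_one] at h
  have h2 : ∑ j, |v j| = Real.sqrt ((∑ j, |v j|)^2) :=
    (Real.sqrt_sq (Finset.sum_nonneg fun j _ => abs_nonneg _)).symm
  rw [h2, vecNorm, ← Real.sqrt_mul (Nat.cast_nonneg n)]
  exact Real.sqrt_le_sqrt h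

lemma specNorm_le_bound {n : ℕ} (A : Matrix (Fin n) (Fin n) ℝ) (a : ℝ) (ha : 0 ≤ a)
    (h : ∀ i j, |A i j| ≤ a) : specNorm A ≤ n * a := by
  refine ContinuousLinearMap.opNorm_le_bound _ (by positivity) fun x => ?_
  set v : Fin n → ℝ := WithLp.equiv 2 (Fin n → ℝ) x with hv
  have hx : x = (WithLp.equiv 2 (Fin n → ℝ)).symm v := rfl
  rw [hx, show Matrix.toEuclideanCLM (𝕜 := ℝ) A ((WithLp.equiv 2 (Fin n → ℝ)).symm v) = (WithLp.equiv 2 (Fin n → ℝ)).symm (A *ᵥ v) from rfl]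
  rw [← vecNorm_eq_norm, ← vecNorm_eq_norm]
  have key : ∀ i, (A *ᵥ v) i ^ 2 ≤ (n * a^2) * ∑ j, v j ^ 2 := by
    intro i
    have := Finset.sum_mul_sq_le_sq_mul_sq Finset.univ (fun j => A i j) v
    have h1 : (A *ᵥ v) i ^ 2 ≤ (∑ j, A i j ^ 2) * ∑ j, v j ^ 2 := by
      simpa [Matrix.mulVec, dotProduct] using this
    refine h1.trans (mul_le_mul_of_nonneg_right ?_ (Finset.sum_nonneg fun j _ => sq_nonneg _))
    calc ∑ j, A i j ^ 2 ≤ ∑ _j : Fin n, a ^ 2 := by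
          refine Finset.sum_le_sum fun j _ => ?_
          rw [← sq_abs]
          exact pow_le_pow_left₀ (abs_nonneg _) (h i j) 2
      _ = n * a ^ 2 := by simp [mul_comm]
  have hsum : ∑ i, (A *ᵥ v) i ^ 2 ≤ (n:ℝ) * ((n * a^2) * ∑ j, v j ^ 2) := by
    calc ∑ i, (A *ᵥ v) i ^ 2 ≤ ∑ _i : Fin n, (n * a^2) * ∑ j, v j ^ 2 :=
          Finset.sum_le_sum fun i _ => key i
      _ = (n:ℝ) * ((n * a^2) * ∑ j, v j ^ 2) := by simp [mul_comm]
  have := Real.sqrt_le_sqrt hsum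
  rw [vecNorm, vecNorm]
  refine this.trans (le_of_eq ?_)
  rw [show (n:ℝ) * ((n * a^2) * ∑ j, v j ^ 2) = (n*a)^2 * ∑ j, v j ^ 2 by ring,
    Real.sqrt_mul (sq_nonneg _), Real.sqrt_sq (by positivity)]





lemma quad_expand {Ω : Type*} {n : ℕ} (g : Ω → ℝ) (X : Fin n → Ω) (c : ℝ) (v : Fin n → ℝ) :
    ∑ i, ∑ j, v i * (c * g (X i) * g (X j)) * v j = c * (∑ j, g (X j) * v j)^2 := by
  have e : (∑ j, g (X j) * v j)^2 = ∑ i, ∑ j, (g (X i) * v i) * (g (X j) * v j) := by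
    rw [sq, Finset.sum_mul_sum]
  rw [e, Finset.mul_sum]
  refine Finset.sum_congr rfl fun i _ => ?_
  rw [Finset.mul_sum]
  exact Finset.sum_congr rfl fun j _ => by ring

lemma quadform_Kpart {Ω : Type*} (ω : ℕ → ℝ) (φ : ℕ → Ω → ℝ) {n : ℕ} (X : Fin n → Ω) (p : ℕ)
    (v : Fin n → ℝ) :
    v ⬝ᵥ (KpartMat ω φ X p *ᵥ v) = ∑ k ∈ Finset.range p, (ω k)⁻¹ * (∑ j, φ k (X j) * v j)^2 := by
  have lhs : v ⬝ᵥ (KpartMat ω φ X p *ᵥ v)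
      = ∑ i, ∑ j, ∑ k ∈ Finset.range p, v i * ((ω k)⁻¹ * φ k (X i) * φ k (X j)) * v j := by
    simp only [dotProduct, Matrix.mulVec, KpartMat, Matrix.of_apply, Kpart, dotProduct,
      Finset.sum_mul, Finset.mul_sum]
    exact Finset.sum_congr rfl fun i _ => Finset.sum_congr rfl fun j _ =>
      Finset.sum_congr rfl fun k _ => by ring
  rw [lhs]
  calc ∑ i, ∑ j, ∑ k ∈ Finset.range p, v i * ((ω k)⁻¹ * φ k (X i) * φ k (X j)) * v j
      = ∑ i, ∑ k ∈ Finset.range p, ∑ j, v i * ((ω k)⁻¹ * φ k (X i) * φ k (X j)) * v j :=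
        Finset.sum_congr rfl fun i _ => Finset.sum_comm
    _ = ∑ k ∈ Finset.range p, ∑ i, ∑ j, v i * ((ω k)⁻¹ * φ k (X i) * φ k (X j)) * v j :=
        Finset.sum_comm
    _ = ∑ k ∈ Finset.range p, (ω k)⁻¹ * (∑ j, φ k (X j) * v j)^2 :=
        Finset.sum_congr rfl fun k _ => quad_expand (φ k) X ((ω k)⁻¹) v

lemma quadform_KMat {Ω : Type*} (ω : ℕ → ℝ) (φ : ℕ → Ω → ℝ) (K : Ω → Ω → ℝ)
    (hKsum : ∀ x y : Ω, HasSum (fun k => (ω k)⁻¹ * φ k x * φ k y) (K x y))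
    {n : ℕ} (X : Fin n → Ω) (v : Fin n → ℝ) :
    HasSum (fun k => (ω k)⁻¹ * (∑ j, φ k (X j) * v j)^2) (v ⬝ᵥ (KMat K X *ᵥ v)) := by
  have h1 : ∀ z : Fin n × Fin n,
      HasSum (fun k => v z.1 * ((ω k)⁻¹ * φ k (X z.1) * φ k (X z.2)) * v z.2)
        (v z.1 * K (X z.1) (X z.2) * v z.2) := by
    intro z
    have := ((hKsum (X z.1) (X z.2)).mul_left (v z.1)).mul_right (v z.2)
    simpa [mul_assoc] using this
  have h2 : HasSum (fun k => ∑ z : Fin n × Fin n,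
      v z.1 * ((ω k)⁻¹ * φ k (X z.1) * φ k (X z.2)) * v z.2)
      (∑ z : Fin n × Fin n, v z.1 * K (X z.1) (X z.2) * v z.2) :=
    hasSum_sum fun z _ => h1 z
  have e1 : ∀ k, ∑ z : Fin n × Fin n, v z.1 * ((ω k)⁻¹ * φ k (X z.1) * φ k (X z.2)) * v z.2
      = (ω k)⁻¹ * (∑ j, φ k (X j) * v j)^2 := by
    intro k
    rw [Fintype.sum_prod_type]
    exact quad_expand (φ k) X ((ω k)⁻¹) v
  have e2 : ∑ z : Fin n × Fin n, v z.1 * K (X z.1) (X z.2) * v z.2 = v ⬝ᵥ (KMat K X *ᵥ v) := by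
    rw [Fintype.sum_prod_type]
    simp only [dotProduct, Matrix.mulVec, KMat, Matrix.of_apply, dotProduct, Finset.mul_sum]
    exact Finset.sum_congr rfl fun i _ => Finset.sum_congr rfl fun j _ => by ring
  rw [← e2]
  exact h2.congr_fun fun k => (e1 k).symm

lemma sum_quad_pos {Ω : Type*} (ω : ℕ → ℝ) (φ : ℕ → Ω → ℝ) (hω : ∀ k, 0 < ω k)
    {n : ℕ} (X : Fin n → Ω) (pX p : ℕ) (hp : pX ≤ p)
    (hpX : ∀ y : Fin n → ℝ, ∃ c : ℕ → ℝ, ∀ j, ∑ k ∈ Finset.range pX, c k * φ k (X j) = y j)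
    (v : Fin n → ℝ) (hv : v ≠ 0) :
    0 < ∑ k ∈ Finset.range p, (ω k)⁻¹ * (∑ j, φ k (X j) * v j)^2 := by
  have hnonneg : ∀ k ∈ Finset.range p, (0:ℝ) ≤ (ω k)⁻¹ * (∑ j, φ k (X j) * v j)^2 :=
    fun k _ => mul_nonneg (inv_nonneg.2 (hω k).le) (sq_nonneg _)
  rcases (Finset.sum_nonneg hnonneg).lt_or_eq with h | h
  · exact h
  exfalso
  have hzero : ∀ k ∈ Finset.range p, (ω k)⁻¹ * (∑ j, φ k (X j) * v j)^2 = 0 :=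
    (Finset.sum_eq_zero_iff_of_nonneg hnonneg).1 h.symm
  have hker : ∀ k, k < p → ∑ j, φ k (X j) * v j = 0 := by
    intro k hk
    have := hzero k (Finset.mem_range.2 hk)
    have hωne : (ω k)⁻¹ ≠ 0 := inv_ne_zero (hω k).ne'
    have := (mul_eq_zero.1 this).resolve_left hωne
    exact pow_eq_zero_iff (by norm_num : (2:ℕ) ≠ 0) |>.mp this
  obtain ⟨c, hc⟩ := hpX v
  have hsum0 : ∑ j, v j ^ 2 = 0 := by
    calc ∑ j, v j ^ 2 = ∑ j, (∑ k ∈ Finset.range pX, c k * φ k (X j)) * v j := by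
          refine Finset.sum_congr rfl fun j _ => ?_
          rw [hc j, sq]
      _ = ∑ j, ∑ k ∈ Finset.range pX, c k * φ k (X j) * v j := by
          exact Finset.sum_congr rfl fun j _ => Finset.sum_mul _ _ _
      _ = ∑ k ∈ Finset.range pX, ∑ j, c k * φ k (X j) * v j := Finset.sum_comm
      _ = ∑ k ∈ Finset.range pX, c k * ∑ j, φ k (X j) * v j := by
          refine Finset.sum_congr rfl fun k _ => ?_
          rw [Finset.mul_sum]
          exact Finset.sum_congr rfl fun j _ => by ring
      _ = 0 := Finset.sum_eq_zero fun k hk => by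
          rw [hker k (lt_of_lt_of_le (Finset.mem_range.1 hk) hp), mul_zero]
  apply hv
  funext j
  have := (Finset.sum_eq_zero_iff_of_nonneg (fun j _ => sq_nonneg (v j))).1 hsum0 j (Finset.mem_univ j)
  exact pow_eq_zero_iff (by norm_num : (2:ℕ) ≠ 0) |>.mp this

lemma KpartMat_posDef {Ω : Type*} (ω : ℕ → ℝ) (φ : ℕ → Ω → ℝ) (hω : ∀ k, 0 < ω k)
    {n : ℕ} (X : Fin n → Ω) (pX p : ℕ) (hp : pX ≤ p)
    (hpX : ∀ y : Fin n → ℝ, ∃ c : ℕ → ℝ, ∀ j, ∑ k ∈ Finset.range pX, c k * φ k (X j) = y j) :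
    (KpartMat ω φ X p).PosDef := by
  refine Matrix.PosDef.of_dotProduct_mulVec_pos ?_ ?_
  · ext i j
    simp only [Matrix.conjTranspose_apply, KpartMat, Matrix.of_apply, Kpart, star_trivial]
    exact Finset.sum_congr rfl fun k _ => by ring
  · intro v hv
    rw [star_trivial, quadform_Kpart]
    exact sum_quad_pos ω φ hω X pX p hp hpX v hv

lemma KMat_posDef {Ω : Type*} (ω : ℕ → ℝ) (φ : ℕ → Ω → ℝ) (K : Ω → Ω → ℝ) (hω : ∀ k, 0 < ω k)
    (hKsum : ∀ x y : Ω, HasSum (fun k => (ω k)⁻¹ * φ k x * φ k y) (K x y))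
    {n : ℕ} (X : Fin n → Ω) (pX : ℕ)
    (hpX : ∀ y : Fin n → ℝ, ∃ c : ℕ → ℝ, ∀ j, ∑ k ∈ Finset.range pX, c k * φ k (X j) = y j) :
    (KMat K X).PosDef := by
  refine Matrix.PosDef.of_dotProduct_mulVec_pos ?_ ?_
  · ext i j
    simp only [Matrix.conjTranspose_apply, KMat, Matrix.of_apply, star_trivial]
    exact ((hKsum (X j) (X i)).unique ((hKsum (X i) (X j)).congr_fun (fun k => by ring)))
  · intro v hv
    rw [star_trivial]
    have h := quadform_KMat ω φ K hKsum X v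
    have hle := sum_le_hasSum (Finset.range pX)
      (fun k _ => mul_nonneg (inv_nonneg.2 (hω k).le) (sq_nonneg _)) h
    exact lt_of_lt_of_le (sum_quad_pos ω φ hω X pX pX le_rfl hpX v hv) hle


lemma term_bound {Ω : Type*} [MeasurableSpace Ω] (μ : Measure Ω) {F : Ω → ℝ} (A B : ℝ)
    (hA : 0 ≤ A) (hB : 0 ≤ B) (hptw : ∀ x, |F x| ≤ A)
    (hL2 : ∫⁻ x, (‖F x‖₊ : ℝ≥0∞)^(2:ℝ) ∂μ ≤ ENNReal.ofReal (B^2))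
    {q : ℝ≥0∞} (hq : 2 ≤ q) :
    eLpNorm F q μ ≤ ENNReal.ofReal (A ^ (1 - (2/q).toReal) * B ^ ((2/q).toReal)) := by
  rcases eq_or_ne q ∞ with hqtop | hqtop
  · subst hqtop
    have h0 : ((2:ℝ≥0∞)/⊤).toReal = 0 := by simp
    rw [h0, sub_zero, Real.rpow_one, Real.rpow_zero, mul_one, eLpNorm_exponent_top]
    exact eLpNormEssSup_le_of_ae_bound (Filter.Eventually.of_forall fun x => by
      rw [Real.norm_eq_abs]; exact hptw x)
  · have hq0 : q ≠ 0 := by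
      intro h; rw [h] at hq; exact absurd hq (by simp)
    set r : ℝ := q.toReal with hr
    have hr2 : 2 ≤ r := by
      have := ENNReal.toReal_mono hqtop hq
      simpa using this
    have hr0 : 0 < r := by linarith
    have hbdd : ∀ x, (‖F x‖₊ : ℝ≥0∞) ≤ ENNReal.ofReal A := fun x => by
      rw [← enorm_eq_nnnorm, ← ofReal_norm]
      exact ENNReal.ofReal_le_ofReal (by rw [Real.norm_eq_abs]; exact hptw x)
    have step : ∀ x, (‖F x‖₊:ℝ≥0∞)^r ≤ (ENNReal.ofReal A)^(r-2) * (‖F x‖₊:ℝ≥0∞)^(2:ℝ) := by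
      intro x
      have e : (‖F x‖₊:ℝ≥0∞)^r = (‖F x‖₊:ℝ≥0∞)^(r-2) * (‖F x‖₊:ℝ≥0∞)^(2:ℝ) := by
        rw [← ENNReal.rpow_add_of_nonneg _ _ (by linarith) (by norm_num)]
        norm_num
      rw [e]
      exact mul_le_mul_left (ENNReal.rpow_le_rpow (hbdd x) (by linarith)) _
    have hAne : (ENNReal.ofReal A)^(r-2) ≠ ∞ :=
      ENNReal.rpow_ne_top_of_nonneg (by linarith) ENNReal.ofReal_ne_top
    have hint : ∫⁻ x, (‖F x‖₊:ℝ≥0∞)^r ∂μ ≤ (ENNReal.ofReal A)^(r-2) * ENNReal.ofReal (B^2) := by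
      calc ∫⁻ x, (‖F x‖₊:ℝ≥0∞)^r ∂μ
          ≤ ∫⁻ x, (ENNReal.ofReal A)^(r-2) * (‖F x‖₊:ℝ≥0∞)^(2:ℝ) ∂μ := lintegral_mono step
        _ = (ENNReal.ofReal A)^(r-2) * ∫⁻ x, (‖F x‖₊:ℝ≥0∞)^(2:ℝ) ∂μ :=
            lintegral_const_mul' _ _ hAne
        _ ≤ _ := mul_le_mul_right hL2 _
    rw [eLpNorm_eq_lintegral_rpow_enorm_toReal hq0 hqtop]
    have h2q : (2/q).toReal = 2/r := by
      rw [ENNReal.toReal_div]; norm_num; rfl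
    calc (∫⁻ x, (‖F x‖₊:ℝ≥0∞) ^ q.toReal ∂μ) ^ (1 / q.toReal)
        ≤ ((ENNReal.ofReal A)^(r-2) * ENNReal.ofReal (B^2)) ^ (1/r) :=
          ENNReal.rpow_le_rpow hint (by positivity)
      _ = (ENNReal.ofReal A)^((r-2)*(1/r)) * (ENNReal.ofReal B)^(2*(1/r)) := by
          rw [ENNReal.mul_rpow_of_nonneg _ _ (by positivity : (0:ℝ) ≤ 1/r),
            ← ENNReal.rpow_mul]
          congr 1
          rw [show (B^2 : ℝ) = B^(2:ℕ) by norm_num, ENNReal.ofReal_pow hB,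
            ← ENNReal.rpow_natCast (ENNReal.ofReal B) 2, ← ENNReal.rpow_mul]
          norm_num
      _ = ENNReal.ofReal (A ^ (1 - (2/q).toReal) * B ^ ((2/q).toReal)) := by
          rw [h2q, ENNReal.ofReal_rpow_of_nonneg hA (mul_nonneg (by linarith) (one_div_pos.mpr hr0).le),
            ENNReal.ofReal_rpow_of_nonneg hB (mul_nonneg (by norm_num) (one_div_pos.mpr hr0).le),
            ← ENNReal.ofReal_mul (by positivity)]
          congr 2
          · field_simp
          · ring



section kernel
variable {Ω : Type*} [MetricSpace Ω] [MeasurableSpace Ω] [BorelSpace Ω] {μ : Measure Ω}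
  {φ : ℕ → Ω → ℝ} {ω : ℕ → ℝ} {K : Ω → Ω → ℝ}

lemma phi_mul_integrable (hφcont : ∀ k, Continuous (φ k))
    (hortho : ∀ j k, ∫ x, φ j x * φ k x ∂μ = if j = k then 1 else 0) (j k : ℕ) :
    Integrable (fun x => φ j x * φ k x) μ := by
  have hsq : ∀ i, Integrable (fun x => φ i x * φ i x) μ := by
    intro i
    by_contra h
    have h2 := hortho i i
    rw [integral_undef h] at h2
    simp at h2
  have hg : Integrable (fun x => (1/2) * (φ j x * φ j x) + (1/2) * (φ k x * φ k x)) μ :=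
    ((hsq j).const_mul _).add ((hsq k).const_mul _)
  refine hg.mono ((hφcont j).mul (hφcont k)).aestronglyMeasurable ?_
  refine Filter.Eventually.of_forall fun x => ?_
  rw [Real.norm_eq_abs, Real.norm_eq_abs]
  have h1 : |φ j x * φ k x| ≤ (1/2)*(φ j x * φ j x) + (1/2)*(φ k x * φ k x) := by
    rw [abs_mul]
    nlinarith [sq_nonneg (|φ j x| - |φ k x|), abs_nonneg (φ j x), abs_nonneg (φ k x),
      sq_abs (φ j x), sq_abs (φ k x), abs_mul_abs_self (φ j x), abs_mul_abs_self (φ k x)]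
  exact h1.trans (le_abs_self _)

lemma sum_sq_pointwise (s : Finset ℕ) (b : ℕ → ℝ) (x : Ω) :
    (∑ k ∈ s, b k * φ k x)^2 = ∑ j ∈ s, ∑ k ∈ s, (b j * b k) * (φ j x * φ k x) := by
  rw [sq, Finset.sum_mul_sum]
  exact Finset.sum_congr rfl fun j _ => Finset.sum_congr rfl fun k _ => by ring

lemma integrable_sum_sq (hφcont : ∀ k, Continuous (φ k))
    (hortho : ∀ j k, ∫ x, φ j x * φ k x ∂μ = if j = k then 1 else 0) (s : Finset ℕ) (b : ℕ → ℝ) :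
    Integrable (fun x => (∑ k ∈ s, b k * φ k x)^2) μ := by
  have h : (fun x => (∑ k ∈ s, b k * φ k x)^2)
      = fun x => ∑ j ∈ s, ∑ k ∈ s, (b j * b k) * (φ j x * φ k x) :=
    funext (sum_sq_pointwise s b)
  rw [h]
  exact integrable_finset_sum _ fun j _ => integrable_finset_sum _ fun k _ =>
    (phi_mul_integrable hφcont hortho j k).const_mul _

lemma integral_sum_sq (hφcont : ∀ k, Continuous (φ k))
    (hortho : ∀ j k, ∫ x, φ j x * φ k x ∂μ = if j = k then 1 else 0) (s : Finset ℕ) (b : ℕ → ℝ) :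
    ∫ x, (∑ k ∈ s, b k * φ k x)^2 ∂μ = ∑ k ∈ s, (b k)^2 := by
  have h : ∫ x, (∑ k ∈ s, b k * φ k x)^2 ∂μ
      = ∫ x, ∑ j ∈ s, ∑ k ∈ s, (b j * b k) * (φ j x * φ k x) ∂μ := by
    congr 1
    exact funext (sum_sq_pointwise s b)
  rw [h, integral_finset_sum _ (fun j _ => integrable_finset_sum _ fun k _ =>
    (phi_mul_integrable hφcont hortho j k).const_mul _)]
  have h2 : ∀ j ∈ s, ∫ x, ∑ k ∈ s, (b j * b k) * (φ j x * φ k x) ∂μ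
      = ∑ k ∈ s, (b j * b k) * (if j = k then (1:ℝ) else 0) := by
    intro j _
    rw [integral_finset_sum _ (fun k _ => (phi_mul_integrable hφcont hortho j k).const_mul _)]
    exact Finset.sum_congr rfl fun k _ => by rw [integral_const_mul, hortho j k]
  rw [Finset.sum_congr rfl h2]
  refine Finset.sum_congr rfl fun j hj => ?_
  rw [Finset.sum_eq_single j (fun k _ hk => by simp [Ne.symm hk]) (fun hj' => absurd hj hj')]
  simp [sq]

lemma term_nonneg (hωpos : ∀ k, 0 < ω k) (k : ℕ) (x : Ω) :
    0 ≤ (ω k)⁻¹ * φ k x * φ k x := by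
  rw [mul_assoc]
  exact mul_nonneg (inv_nonneg.2 (hωpos k).le) (mul_self_nonneg _)

lemma Kdiag_nonneg (hωpos : ∀ k, 0 < ω k)
    (hKsum : ∀ x y : Ω, HasSum (fun k => (ω k)⁻¹ * φ k x * φ k y) (K x y)) (x : Ω) :
    0 ≤ K x x :=
  hasSum_le (fun k => term_nonneg hωpos k x) hasSum_zero (hKsum x x)

lemma absK_le_half (hωpos : ∀ k, 0 < ω k)
    (hKsum : ∀ x y : Ω, HasSum (fun k => (ω k)⁻¹ * φ k x * φ k y) (K x y)) (x y : Ω) :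
    |K x y| ≤ (K x x + K y y)/2 := by
  have hsum2 : HasSum (fun k => ((ω k)⁻¹ * φ k x * φ k x + (ω k)⁻¹ * φ k y * φ k y)/2)
      ((K x x + K y y)/2) := ((hKsum x x).add (hKsum y y)).div_const 2
  refine abs_le.2 ⟨?_, ?_⟩
  · have h := hasSum_le (fun k => by
      have hc := inv_nonneg.2 (hωpos k).le
      nlinarith [mul_nonneg hc (sq_nonneg (φ k x + φ k y))]) (hKsum x y).neg hsum2
    linarith
  · exact hasSum_le (fun k => by
      have hc := inv_nonneg.2 (hωpos k).le
      nlinarith [mul_nonneg hc (sq_nonneg (φ k x - φ k y))]) (hKsum x y) hsum2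

lemma enn_sq_eq (t : ℝ) : (‖t‖₊ : ℝ≥0∞)^(2:ℝ) = ENNReal.ofReal (t^2) := by
  rw [← enorm_eq_nnnorm, ← ofReal_norm, ENNReal.ofReal_rpow_of_nonneg (norm_nonneg t) (by norm_num)]
  congr 1
  rw [Real.norm_eq_abs, show (2:ℝ) = ((2:ℕ):ℝ) by norm_num, Real.rpow_natCast, sq_abs]

lemma lintegral_tail_sq_le (hφcont : ∀ k, Continuous (φ k))
    (hortho : ∀ j k, ∫ x, φ j x * φ k x ∂μ = if j = k then 1 else 0)
    (hωpos : ∀ k, 0 < ω k)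
    (hKsum : ∀ x y : Ω, HasSum (fun k => (ω k)⁻¹ * φ k x * φ k y) (K x y))
    (a : Ω) (p : ℕ) (Sb : ℝ) (hSb0 : 0 ≤ Sb) (hSb : ∀ k, p ≤ k → (ω k)⁻¹ ≤ Sb)
    (D : ℝ) (hD : K a a - Kpart ω φ p a a ≤ D) :
    ∫⁻ x, (‖K x a - Kpart ω φ p x a‖₊ : ℝ≥0∞)^(2:ℝ) ∂μ ≤ ENNReal.ofReal (Sb * D) := by
  set f : ℕ → Ω → ℝ := fun k x => (ω k)⁻¹ * φ k x * φ k a with hf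
  set T : ℕ → Ω → ℝ := fun N x => ∑ k ∈ Finset.Ico p (p+N), f k x with hT
  have hKpart : ∀ x, Kpart ω φ p x a = ∑ k ∈ Finset.range p, f k x := fun x => rfl
  have hTeq : ∀ N x, T N x = ∑ k ∈ Finset.range (p+N), f k x - ∑ k ∈ Finset.range p, f k x :=
    fun N x => Finset.sum_Ico_eq_sub _ (Nat.le_add_right p N)
  have hTcont : ∀ N, Continuous (T N) := by
    intro N
    apply continuous_finset_sum
    intro k _
    exact ((continuous_const.mul (hφcont k)).mul continuous_const)
  have htend : ∀ x, Tendsto (fun N => T N x) atTop (𝓝 (K x a - Kpart ω φ p x a)) := by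
    intro x
    have h1 : Tendsto (fun N => ∑ k ∈ Finset.range N, f k x) atTop (𝓝 (K x a)) :=
      (hKsum x a).tendsto_sum_nat
    have h2 : Tendsto (fun N => ∑ k ∈ Finset.range (p+N), f k x) atTop (𝓝 (K x a)) := by
      have := h1.comp (tendsto_add_atTop_nat p)
      exact this.congr fun N => by simp [Nat.add_comm]
    have h3 := h2.sub_const (∑ k ∈ Finset.range p, f k x)
    rw [hKpart]
    exact Tendsto.congr (fun N => (hTeq N x).symm) h3
  have hlim : ∀ x, (‖K x a - Kpart ω φ p x a‖₊:ℝ≥0∞)^(2:ℝ)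
      = liminf (fun N => (‖T N x‖₊:ℝ≥0∞)^(2:ℝ)) atTop := by
    intro x
    have hc : Continuous (fun t : ℝ => ((‖t‖₊:ℝ≥0∞))^(2:ℝ)) :=
      ENNReal.continuous_rpow_const.comp (ENNReal.continuous_coe.comp continuous_nnnorm)
    exact ((hc.tendsto _).comp (htend x)).liminf_eq.symm
  calc ∫⁻ x, (‖K x a - Kpart ω φ p x a‖₊:ℝ≥0∞)^(2:ℝ) ∂μ
      = ∫⁻ x, liminf (fun N => (‖T N x‖₊:ℝ≥0∞)^(2:ℝ)) atTop ∂μ := lintegral_congr hlim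
    _ ≤ liminf (fun N => ∫⁻ x, (‖T N x‖₊:ℝ≥0∞)^(2:ℝ) ∂μ) atTop := by
        refine lintegral_liminf_le fun N => ?_
        exact (ENNReal.continuous_rpow_const.comp
          (ENNReal.continuous_coe.comp (continuous_nnnorm.comp (hTcont N)))).measurable
    _ ≤ ENNReal.ofReal (Sb * D) := by
        refine liminf_le_of_frequently_le (Filter.Frequently.of_forall fun N => ?_) (by isBoundedDefault)
        -- bound for fixed N
        have hTb : ∀ x, T N x = ∑ k ∈ Finset.Ico p (p+N), ((ω k)⁻¹ * φ k a) * φ k x := by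
          intro x
          exact Finset.sum_congr rfl fun k _ => by rw [hf]; ring
        have hint : ∫ x, (T N x)^2 ∂μ = ∑ k ∈ Finset.Ico p (p+N), ((ω k)⁻¹ * φ k a)^2 := by
          rw [show (fun x => (T N x)^2) = fun x => (∑ k ∈ Finset.Ico p (p+N), ((ω k)⁻¹ * φ k a) * φ k x)^2
            from funext fun x => by rw [hTb x]]
          exact integral_sum_sq hφcont hortho _ _
        have hintg : Integrable (fun x => (T N x)^2) μ := by
          rw [show (fun x => (T N x)^2) = fun x => (∑ k ∈ Finset.Ico p (p+N), ((ω k)⁻¹ * φ k a) * φ k x)^2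
            from funext fun x => by rw [hTb x]]
          exact integrable_sum_sq hφcont hortho _ _
        have heq : ∫⁻ x, (‖T N x‖₊:ℝ≥0∞)^(2:ℝ) ∂μ = ENNReal.ofReal (∫ x, (T N x)^2 ∂μ) := by
          rw [ofReal_integral_eq_lintegral_ofReal hintg
            (Filter.Eventually.of_forall fun x => sq_nonneg _)]
          exact lintegral_congr fun x => enn_sq_eq _
        rw [heq, hint]
        refine ENNReal.ofReal_le_ofReal ?_
        have hb1 : ∑ k ∈ Finset.Ico p (p+N), ((ω k)⁻¹ * φ k a)^2
            ≤ Sb * ∑ k ∈ Finset.Ico p (p+N), (ω k)⁻¹ * φ k a * φ k a := by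
          rw [Finset.mul_sum]
          refine Finset.sum_le_sum fun k hk => ?_
          have hkp : p ≤ k := (Finset.mem_Ico.1 hk).1
          have h1 : ((ω k)⁻¹ * φ k a)^2 = (ω k)⁻¹ * ((ω k)⁻¹ * φ k a * φ k a) := by ring
          rw [h1]
          exact mul_le_mul_of_nonneg_right (hSb k hkp) (term_nonneg hωpos k a)
        have hb2 : ∑ k ∈ Finset.Ico p (p+N), (ω k)⁻¹ * φ k a * φ k a
            ≤ K a a - Kpart ω φ p a a := by
          rw [Finset.sum_Ico_eq_sub _ (Nat.le_add_right p N), hKpart]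
          have := sum_le_hasSum (Finset.range (p+N)) (fun k _ => term_nonneg hωpos k a) (hKsum a a)
          linarith
        calc ∑ k ∈ Finset.Ico p (p+N), ((ω k)⁻¹ * φ k a)^2
            ≤ Sb * (K a a - Kpart ω φ p a a) := hb1.trans
              (mul_le_mul_of_nonneg_left hb2 hSb0)
          _ ≤ Sb * D := mul_le_mul_of_nonneg_left hD hSb0

end kernel

lemma eLpNorm_two_eq {α : Type*} [MeasurableSpace α] (ν : Measure α) (F : α → ℝ) :
    eLpNorm F 2 ν = (∫⁻ x, (‖F x‖₊:ℝ≥0∞)^(2:ℝ) ∂ν)^(1/2 : ℝ) := by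
  rw [eLpNorm_eq_lintegral_rpow_enorm_toReal (by norm_num) (by norm_num)]
  simp only [enorm_eq_nnnorm]
  norm_num

lemma lintegral_sq_eq_eLpNorm_sq {α : Type*} [MeasurableSpace α] (ν : Measure α) (F : α → ℝ) :
    ∫⁻ x, (‖F x‖₊:ℝ≥0∞)^(2:ℝ) ∂ν = (eLpNorm F 2 ν)^(2:ℝ) := by
  rw [eLpNorm_two_eq, ← ENNReal.rpow_mul]
  norm_num

lemma eLpNorm_two_le_sqrt {α : Type*} [MeasurableSpace α] {ν : Measure α} {F : α → ℝ}
    {C : ℝ} (hC : 0 ≤ C) (hlt : ∫⁻ x, (‖F x‖₊:ℝ≥0∞)^(2:ℝ) ∂ν ≤ ENNReal.ofReal C) :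
    eLpNorm F 2 ν ≤ ENNReal.ofReal (Real.sqrt C) := by
  rw [eLpNorm_two_eq]
  calc (∫⁻ x, (‖F x‖₊:ℝ≥0∞)^(2:ℝ) ∂ν)^(1/2:ℝ) ≤ (ENNReal.ofReal C)^(1/2:ℝ) :=
        ENNReal.rpow_le_rpow hlt (by norm_num)
    _ = ENNReal.ofReal (Real.sqrt C) := by
        rw [ENNReal.ofReal_rpow_of_nonneg hC (by norm_num), Real.sqrt_eq_rpow]

lemma lintegral_sq_le_of_eLpNorm_two_le {α : Type*} [MeasurableSpace α] {ν : Measure α}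
    {F : α → ℝ} {B : ℝ} (hB : 0 ≤ B) (h : eLpNorm F 2 ν ≤ ENNReal.ofReal B) :
    ∫⁻ x, (‖F x‖₊:ℝ≥0∞)^(2:ℝ) ∂ν ≤ ENNReal.ofReal (B^2) := by
  rw [lintegral_sq_eq_eLpNorm_sq]
  calc (eLpNorm F 2 ν)^(2:ℝ) ≤ (ENNReal.ofReal B)^(2:ℝ) :=
        ENNReal.rpow_le_rpow h (by norm_num)
    _ = ENNReal.ofReal (B^2) := by
        rw [ENNReal.ofReal_rpow_of_nonneg hB (by norm_num)]
        congr 1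
        rw [show (2:ℝ) = ((2:ℕ):ℝ) by norm_num, Real.rpow_natCast]


/-- Quantitative bound on `‖f_p − f_∞‖_{L^q_μ(Ω)}` for `p ≥ p_X`, `2 ≤ q ≤ ∞`. -/
theorem min_norm_interpolants_quantitative_bound
    {Ω : Type*} [MetricSpace Ω] [MeasurableSpace Ω] [BorelSpace Ω] (μ : Measure Ω)
    (hμpos : ∀ U : Set Ω, IsOpen U → U.Nonempty → 0 < μ U)
    (Ωm : ℕ → Set Ω) (hΩcpt : ∀ m, IsCompact (Ωm m)) (hΩmono : Monotone Ωm)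
    (hΩfin : ∀ m, μ (Ωm m) < ⊤) (hΩunion : (⋃ m, Ωm m) = Set.univ)
    (φ : ℕ → Ω → ℝ) (hφcont : ∀ k, Continuous (φ k))
    (hortho : ∀ j k, ∫ x, φ j x * φ k x ∂μ = if j = k then 1 else 0)
    (ω : ℕ → ℝ) (hωpos : ∀ k, 0 < ω k) (hωtop : Tendsto ω atTop atTop)
    (K : Ω → Ω → ℝ)
    (hKabs : ∀ x y : Ω, Summable fun k => |(ω k)⁻¹ * φ k x * φ k y|)
    (hKsum : ∀ x y : Ω, HasSum (fun k => (ω k)⁻¹ * φ k x * φ k y) (K x y))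
    (hKunif : TendstoUniformly (fun p (z : Ω × Ω) => Kpart ω φ p z.1 z.2)
      (fun z => K z.1 z.2) atTop)
    (hKbdd : ∃ M : ℝ, ∀ x y : Ω, |K x y| ≤ M)
    (hKcont : Continuous fun z : Ω × Ω => K z.1 z.2)
    (hKL2 : MemLp (fun z : Ω × Ω => K z.1 z.2) 2 (μ.prod μ))
    {n : ℕ} (X : Fin n → Ω) (hXinj : Function.Injective X)
    (pX : ℕ)
    (hpX : ∀ y : Fin n → ℝ, ∃ c : ℕ → ℝ, ∀ j, ∑ k ∈ Finset.range pX, c k * φ k (X j) = y j)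
    (y : Fin n → ℝ) :
    ∀ p : ℕ, pX ≤ p → ∀ q : ℝ≥0∞, 2 ≤ q →
      eLpNorm (fun x => interpP ω φ X y p x - interpInf K X y x) q μ ≤
        ENNReal.ofReal
          ((CK K) ^ ((1 - 1/q).toReal) * (⨆ k : ℕ, (ω k)⁻¹) ^ ((1/q).toReal) *
              (n : ℝ) ^ ((3 : ℝ)/2) * alphaP K ω φ p *
              specNorm ((KpartMat ω φ X p)⁻¹) * specNorm ((KMat K X)⁻¹) * vecNorm y +
            (alphaP K ω φ p) ^ ((1 - 1/q).toReal) * (⨆ k : ℕ, (ω (p + k))⁻¹) ^ ((1/q).toReal) *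
              (n : ℝ) ^ ((1 : ℝ)/2) * specNorm ((KpartMat ω φ X p)⁻¹) * vecNorm y) := by
  intro p hp q hq
  -- trivial case n = 0
  rcases Nat.eq_zero_or_pos n with hn0 | hnpos
  · subst hn0
    have hzero : (fun x => interpP ω φ X y p x - interpInf K X y x) = fun _ => (0:ℝ) := by
      funext x
      simp [interpP, interpInf]
    rw [hzero, show (fun _ : Ω => (0:ℝ)) = (0 : Ω → ℝ) from rfl, eLpNorm_zero]
    exact zero_le
  -- nonempty Ω
  have hex : ∃ a : Ω, φ 0 a ≠ 0 := by
    by_contra hcon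
    push_neg at hcon
    have h2 := hortho 0 0
    have h3 : ∫ x, φ 0 x * φ 0 x ∂μ = 0 := by
      simp [hcon]
    rw [h3] at h2
    simp at h2
  obtain ⟨a₀, ha₀⟩ := hex
  have : Nonempty Ω := ⟨a₀⟩
  -- abbreviations
  set A : Matrix (Fin n) (Fin n) ℝ := KpartMat ω φ X p with hA
  set B : Matrix (Fin n) (Fin n) ℝ := KMat K X with hB
  set α : ℝ := alphaP K ω φ p with hαdef
  set C : ℝ := CK K with hCdef
  set S : ℝ := ⨆ k : ℕ, (ω k)⁻¹ with hSdef
  set Sp : ℝ := ⨆ k : ℕ, (ω (p + k))⁻¹ with hSpdef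
  set P : ℝ := specNorm A⁻¹ with hPdef
  set Q : ℝ := specNorm B⁻¹ with hQdef
  set Y : ℝ := vecNorm y with hYdef
  have hP0 : 0 ≤ P := specNorm_nonneg _
  have hQ0 : 0 ≤ Q := specNorm_nonneg _
  have hY0 : 0 ≤ Y := vecNorm_nonneg _
  -- sup of inverse weights
  have hωinv0 : Tendsto (fun k => (ω k)⁻¹) atTop (𝓝 0) :=
    tendsto_inv_atTop_zero.comp hωtop
  have hbddS : BddAbove (Set.range fun k => (ω k)⁻¹) := hωinv0.bddAbove_range
  have hbddSp : BddAbove (Set.range fun k => (ω (p + k))⁻¹) := by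
    have ht : Tendsto (fun k => (ω (p + k))⁻¹) atTop (𝓝 0) :=
      (hωinv0.comp (tendsto_add_atTop_nat p)).congr fun k => by simp [Function.comp, Nat.add_comm]
    exact ht.bddAbove_range
  have hSk : ∀ k, (ω k)⁻¹ ≤ S := fun k => le_ciSup hbddS k
  have hSpk : ∀ k, p ≤ k → (ω k)⁻¹ ≤ Sp := by
    intro k hk
    have h := le_ciSup hbddSp (k - p)
    rwa [Nat.add_sub_cancel' hk] at h
  have hSpos : 0 < S := lt_of_lt_of_le (inv_pos.2 (hωpos 0)) (hSk 0)
  have hSppos : 0 < Sp := lt_of_lt_of_le (inv_pos.2 (hωpos p)) (hSpk p le_rfl)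
  -- CK facts
  obtain ⟨M, hM⟩ := hKbdd
  have hbddCK : BddAbove (Set.range fun x => K x x) := by
    refine ⟨M, ?_⟩
    rintro t ⟨x, rfl⟩
    exact (abs_le.1 (hM x x)).2
  have hCKle : ∀ x, K x x ≤ C := fun x => le_ciSup hbddCK x
  have hterm_le_diag : ∀ (k:ℕ) (x:Ω), (ω k)⁻¹ * φ k x * φ k x ≤ K x x := fun k x =>
    le_hasSum (hKsum x x) k (fun j _ => term_nonneg hωpos j x)
  have hCpos : 0 < C := by
    have h1 : 0 < (ω 0)⁻¹ * φ 0 a₀ * φ 0 a₀ := by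
      rw [mul_assoc]
      exact mul_pos (inv_pos.2 (hωpos 0)) (mul_self_pos.2 ha₀)
    exact lt_of_lt_of_le (lt_of_lt_of_le h1 (hterm_le_diag 0 a₀)) (hCKle a₀)
  have hKabs_le : ∀ x z, |K x z| ≤ C := by
    intro x z
    refine (absK_le_half hωpos hKsum x z).trans ?_
    have h1 := hCKle x
    have h2 := hCKle z
    linarith
  -- alphaP facts
  have hterm_abs : ∀ (k:ℕ) (x z:Ω), |(ω k)⁻¹ * φ k x * φ k z| ≤ C := by
    intro k x z
    have hc := inv_nonneg.2 (hωpos k).le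
    have h1 : |(ω k)⁻¹ * φ k x * φ k z|
        ≤ ((ω k)⁻¹ * φ k x * φ k x + (ω k)⁻¹ * φ k z * φ k z)/2 :=
      abs_le.2 ⟨by nlinarith [mul_nonneg hc (sq_nonneg (φ k x + φ k z))],
        by nlinarith [mul_nonneg hc (sq_nonneg (φ k x - φ k z))]⟩
    have h2 := (hterm_le_diag k x).trans (hCKle x)
    have h3 := (hterm_le_diag k z).trans (hCKle z)
    linarith
  have hKpart_abs : ∀ (x z : Ω), |Kpart ω φ p x z| ≤ p * C := by
    intro x z
    refine (Finset.abs_sum_le_sum_abs _ _).trans ?_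
    calc ∑ k ∈ Finset.range p, |(ω k)⁻¹ * φ k x * φ k z|
        ≤ ∑ _k ∈ Finset.range p, C := Finset.sum_le_sum fun k _ => hterm_abs k x z
      _ = p * C := by simp [mul_comm]
  have hbddα : BddAbove (Set.range fun z : Ω × Ω => |K z.1 z.2 - Kpart ω φ p z.1 z.2|) := by
    refine ⟨C + p * C, ?_⟩
    rintro t ⟨z, rfl⟩
    calc |K z.1 z.2 - Kpart ω φ p z.1 z.2| ≤ |K z.1 z.2| + |Kpart ω φ p z.1 z.2| :=
          abs_sub _ _
      _ ≤ C + p * C := add_le_add (hKabs_le _ _) (hKpart_abs _ _)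
  have hαle : ∀ x z : Ω, |K x z - Kpart ω φ p x z| ≤ α := fun x z =>
    le_ciSup hbddα (⟨x, z⟩ : Ω × Ω)
  have hα0 : 0 ≤ α := (abs_nonneg _).trans (hαle a₀ a₀)
  have htail_le : ∀ x, K x x - Kpart ω φ p x x ≤ α := fun x =>
    (le_abs_self _).trans (hαle x x)
  -- invertibility
  have hAposDef : A.PosDef := KpartMat_posDef ω φ hωpos X pX p hp hpX
  have hBposDef : B.PosDef := KMat_posDef ω φ K hωpos hKsum X pX hpX
  have hAunit : IsUnit A.det := hAposDef.det_pos.ne'.isUnit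
  have hBunit : IsUnit B.det := hBposDef.det_pos.ne'.isUnit
  -- coefficient vectors
  set cp : Fin n → ℝ := A⁻¹ *ᵥ y with hcp_def
  set cinf : Fin n → ℝ := B⁻¹ *ᵥ y with hcinf_def
  set d : Fin n → ℝ := fun j => cp j - cinf j with hd_def
  have hmat : A⁻¹ - B⁻¹ = A⁻¹ * (B - A) * B⁻¹ := by
    rw [Matrix.mul_sub, Matrix.sub_mul, Matrix.mul_assoc, Matrix.mul_nonsing_inv B hBunit,
      Matrix.nonsing_inv_mul A hAunit, Matrix.mul_one, Matrix.one_mul]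
  have hd_eq : d = (A⁻¹ * (B - A) * B⁻¹) *ᵥ y := by
    rw [← hmat, Matrix.sub_mulVec]
    funext j
    simp [hd_def, hcp_def, hcinf_def]
  -- norm of B - A
  have hBA : specNorm (B - A) ≤ (n:ℝ) * α := by
    refine specNorm_le_bound _ _ hα0 fun i j => ?_
    have : (B - A) i j = K (X i) (X j) - Kpart ω φ p (X i) (X j) := by
      simp [hA, hB, KMat, KpartMat, Matrix.sub_apply]
    rw [this]
    exact hαle _ _
  -- bound on d
  set Dd : ℝ := P * ((n:ℝ) * α * (Q * Y)) with hDd_def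
  have hDd0 : 0 ≤ Dd := by
    have : (0:ℝ) ≤ (n:ℝ) * α := mul_nonneg (Nat.cast_nonneg n) hα0
    exact mul_nonneg hP0 (mul_nonneg this (mul_nonneg hQ0 hY0))
  have hd_bound : vecNorm d ≤ Dd := by
    rw [hd_eq, ← Matrix.mulVec_mulVec, ← Matrix.mulVec_mulVec]
    calc vecNorm (A⁻¹ *ᵥ ((B - A) *ᵥ (B⁻¹ *ᵥ y)))
        ≤ P * vecNorm ((B - A) *ᵥ (B⁻¹ *ᵥ y)) := vecNorm_mulVec_le _ _
      _ ≤ P * (specNorm (B - A) * vecNorm (B⁻¹ *ᵥ y)) :=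
          mul_le_mul_of_nonneg_left (vecNorm_mulVec_le _ _) hP0
      _ ≤ Dd := by
          rw [hDd_def]
          refine mul_le_mul_of_nonneg_left ?_ hP0
          refine mul_le_mul hBA (vecNorm_mulVec_le _ _) (vecNorm_nonneg _)
            (mul_nonneg (Nat.cast_nonneg n) hα0)
  have hcp_bound : vecNorm cp ≤ P * Y := vecNorm_mulVec_le _ _
  -- the two pieces
  set g : Ω → ℝ := fun x => ∑ j, K x (X j) * d j with hg_def
  set h : Ω → ℝ := fun x => ∑ j, (Kpart ω φ p x (X j) - K x (X j)) * cp j with hh_def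
  have hsplit : (fun x => interpP ω φ X y p x - interpInf K X y x) = fun x => g x + h x := by
    funext x
    simp only [interpP, interpInf, hg_def, hh_def, ← hA, ← hB, ← hcp_def, ← hcinf_def]
    rw [← Finset.sum_add_distrib, ← Finset.sum_sub_distrib]
    refine Finset.sum_congr rfl fun j _ => ?_
    simp only [hd_def]
    ring
  have hgc : Continuous g := by
    refine continuous_finset_sum _ fun j _ => ?_
    exact (hKcont.comp (continuous_id.prodMk continuous_const)).mul continuous_const
  have hKpartc : ∀ a : Ω, Continuous (fun x => Kpart ω φ p x a) := by
    intro a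
    apply continuous_finset_sum
    intro k _
    exact (continuous_const.mul (hφcont k)).mul continuous_const
  have hhc : Continuous h := by
    refine continuous_finset_sum _ fun j _ => ?_
    exact ((hKpartc (X j)).sub (hKcont.comp (continuous_id.prodMk continuous_const))).mul
      continuous_const
  -- ∑ |d j| and ∑ |cp j|
  have hsum_d : ∑ j, |d j| ≤ Real.sqrt n * Dd :=
    (sum_abs_le_sqrt_mul_vecNorm d).trans
      (mul_le_mul_of_nonneg_left hd_bound (Real.sqrt_nonneg _))
  have hsum_cp : ∑ j, |cp j| ≤ Real.sqrt n * (P * Y) :=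
    (sum_abs_le_sqrt_mul_vecNorm cp).trans
      (mul_le_mul_of_nonneg_left hcp_bound (Real.sqrt_nonneg _))
  -- L∞ and L² constants
  set W1 : ℝ := Real.sqrt n * Dd with hW1_def
  set W2 : ℝ := Real.sqrt n * (P * Y) with hW2_def
  have hW10 : 0 ≤ W1 := mul_nonneg (Real.sqrt_nonneg _) hDd0
  have hW20 : 0 ≤ W2 := mul_nonneg (Real.sqrt_nonneg _) (mul_nonneg hP0 hY0)
  -- pointwise bounds
  have hg_ptw : ∀ x, |g x| ≤ C * W1 := by
    intro x
    calc |g x| ≤ ∑ j, |K x (X j) * d j| := Finset.abs_sum_le_sum_abs _ _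
      _ ≤ ∑ j, C * |d j| := by
          refine Finset.sum_le_sum fun j _ => ?_
          rw [abs_mul]
          exact mul_le_mul_of_nonneg_right (hKabs_le _ _) (abs_nonneg _)
      _ = C * ∑ j, |d j| := by rw [Finset.mul_sum]
      _ ≤ C * W1 := mul_le_mul_of_nonneg_left hsum_d hCpos.le
  have hh_ptw : ∀ x, |h x| ≤ α * W2 := by
    intro x
    calc |h x| ≤ ∑ j, |(Kpart ω φ p x (X j) - K x (X j)) * cp j| :=
          Finset.abs_sum_le_sum_abs _ _
      _ ≤ ∑ j, α * |cp j| := by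
          refine Finset.sum_le_sum fun j _ => ?_
          rw [abs_mul, abs_sub_comm]
          exact mul_le_mul_of_nonneg_right (hαle _ _) (abs_nonneg _)
      _ = α * ∑ j, |cp j| := by rw [Finset.mul_sum]
      _ ≤ α * W2 := mul_le_mul_of_nonneg_left hsum_cp hα0
  -- L² bounds on sections
  have hsectK : ∀ a : Ω, eLpNorm (fun x => K x a) 2 μ ≤ ENNReal.ofReal (Real.sqrt (S * C)) := by
    intro a
    refine eLpNorm_two_le_sqrt (mul_nonneg hSpos.le hCpos.le) ?_
    have h0 : ∀ x, K x a - Kpart ω φ 0 x a = K x a := by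
      intro x
      simp [Kpart]
    have := lintegral_tail_sq_le (μ := μ) hφcont hortho hωpos hKsum a 0 S hSpos.le
      (fun k _ => hSk k) C (by simpa [Kpart] using hCKle a)
    simpa only [h0] using this
  have hsectT : ∀ a : Ω, eLpNorm (fun x => K x a - Kpart ω φ p x a) 2 μ
      ≤ ENNReal.ofReal (Real.sqrt (Sp * α)) := by
    intro a
    refine eLpNorm_two_le_sqrt (mul_nonneg hSppos.le hα0) ?_
    exact lintegral_tail_sq_le (μ := μ) hφcont hortho hωpos hKsum a p Sp hSppos.le
      hSpk α (htail_le a)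
  -- L² bound on g
  have hg_L2 : eLpNorm g 2 μ ≤ ENNReal.ofReal (Real.sqrt (S * C) * W1) := by
    have hg_sum : g = ∑ j : Fin n, (fun x => d j • K x (X j)) := by
      funext x
      rw [Finset.sum_apply]
      exact Finset.sum_congr rfl fun j _ => by simp [smul_eq_mul, mul_comm]
    rw [hg_sum]
    calc eLpNorm (∑ j : Fin n, (fun x => d j • K x (X j))) 2 μ
        ≤ ∑ j : Fin n, eLpNorm (fun x => d j • K x (X j)) 2 μ := by
          refine eLpNorm_sum_le (fun j _ => ?_) (by norm_num)
          exact (((hKcont.comp (continuous_id.prodMk continuous_const)).const_smul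
            (d j))).aestronglyMeasurable
      _ ≤ ∑ j : Fin n, ENNReal.ofReal (|d j| * Real.sqrt (S * C)) := by
          refine Finset.sum_le_sum fun j _ => ?_
          have he : (fun x => d j • K x (X j)) = d j • (fun x => K x (X j)) := rfl
          rw [he, eLpNorm_const_smul]
          calc ‖d j‖₊ • eLpNorm (fun x => K x (X j)) 2 μ
              ≤ ‖d j‖₊ • ENNReal.ofReal (Real.sqrt (S * C)) := by
                rw [ENNReal.smul_def, ENNReal.smul_def]
                exact mul_le_mul_right (hsectK (X j)) _
            _ = ENNReal.ofReal (|d j| * Real.sqrt (S * C)) := by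
                rw [ENNReal.smul_def, smul_eq_mul, ← enorm_eq_nnnorm, ← ofReal_norm,
                  Real.norm_eq_abs, ← ENNReal.ofReal_mul (abs_nonneg _)]
      _ = ENNReal.ofReal (∑ j, |d j| * Real.sqrt (S * C)) := by
          rw [ENNReal.ofReal_sum_of_nonneg]
          intro j _
          exact mul_nonneg (abs_nonneg _) (Real.sqrt_nonneg _)
      _ ≤ ENNReal.ofReal (Real.sqrt (S * C) * W1) := by
          refine ENNReal.ofReal_le_ofReal ?_
          rw [← Finset.sum_mul]
          rw [mul_comm]
          exact mul_le_mul_of_nonneg_left hsum_d (Real.sqrt_nonneg _)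
  -- L² bound on h
  have hh_L2 : eLpNorm h 2 μ ≤ ENNReal.ofReal (Real.sqrt (Sp * α) * W2) := by
    have hh_sum : h = ∑ j : Fin n, (fun x => cp j • (Kpart ω φ p x (X j) - K x (X j))) := by
      funext x
      rw [Finset.sum_apply]
      exact Finset.sum_congr rfl fun j _ => by simp [smul_eq_mul, mul_comm]
    rw [hh_sum]
    calc eLpNorm (∑ j : Fin n, (fun x => cp j • (Kpart ω φ p x (X j) - K x (X j)))) 2 μ
        ≤ ∑ j : Fin n, eLpNorm (fun x => cp j • (Kpart ω φ p x (X j) - K x (X j))) 2 μ := by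
          refine eLpNorm_sum_le (fun j _ => ?_) (by norm_num)
          exact (((hKpartc (X j)).sub
            (hKcont.comp (continuous_id.prodMk continuous_const))).const_smul
            (cp j)).aestronglyMeasurable
      _ ≤ ∑ j : Fin n, ENNReal.ofReal (|cp j| * Real.sqrt (Sp * α)) := by
          refine Finset.sum_le_sum fun j _ => ?_
          have he : (fun x => cp j • (Kpart ω φ p x (X j) - K x (X j)))
              = cp j • (fun x => Kpart ω φ p x (X j) - K x (X j)) := rfl
          rw [he, eLpNorm_const_smul]
          have hneg : eLpNorm (fun x => Kpart ω φ p x (X j) - K x (X j)) 2 μ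
              = eLpNorm (fun x => K x (X j) - Kpart ω φ p x (X j)) 2 μ := by
            rw [show (fun x => Kpart ω φ p x (X j) - K x (X j))
              = -(fun x => K x (X j) - Kpart ω φ p x (X j)) from funext fun x => by simp,
              eLpNorm_neg]
          calc ‖cp j‖₊ • eLpNorm (fun x => Kpart ω φ p x (X j) - K x (X j)) 2 μ
              ≤ ‖cp j‖₊ • ENNReal.ofReal (Real.sqrt (Sp * α)) := by
                rw [hneg, ENNReal.smul_def, ENNReal.smul_def]
                exact mul_le_mul_right (hsectT (X j)) _
            _ = ENNReal.ofReal (|cp j| * Real.sqrt (Sp * α)) := by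
                rw [ENNReal.smul_def, smul_eq_mul, ← enorm_eq_nnnorm, ← ofReal_norm,
                  Real.norm_eq_abs, ← ENNReal.ofReal_mul (abs_nonneg _)]
      _ = ENNReal.ofReal (∑ j, |cp j| * Real.sqrt (Sp * α)) := by
          rw [ENNReal.ofReal_sum_of_nonneg]
          intro j _
          exact mul_nonneg (abs_nonneg _) (Real.sqrt_nonneg _)
      _ ≤ ENNReal.ofReal (Real.sqrt (Sp * α) * W2) := by
          refine ENNReal.ofReal_le_ofReal ?_
          rw [← Finset.sum_mul, mul_comm]
          exact mul_le_mul_of_nonneg_left hsum_cp (Real.sqrt_nonneg _)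
  -- interpolation exponents
  set θ : ℝ := (2/q).toReal with hθdef
  set s : ℝ := (1/q).toReal with hsdef
  have hq1 : (1:ℝ≥0∞) ≤ q := le_trans (by norm_num) hq
  have hθs : θ = 2 * s := by
    rw [hθdef, hsdef, ENNReal.toReal_div, ENNReal.toReal_div, ENNReal.toReal_one,
      ENNReal.toReal_ofNat]
    ring
  have h1q_le : 1/q ≤ (1/2 : ℝ≥0∞) := ENNReal.div_le_div_left hq 1
  have hs0 : 0 ≤ s := ENNReal.toReal_nonneg
  have hs_half : s ≤ 1/2 := by
    have h2 := ENNReal.toReal_mono (by norm_num : (1/2:ℝ≥0∞) ≠ ⊤) h1q_le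
    rw [hsdef]
    refine h2.trans (le_of_eq ?_)
    rw [ENNReal.toReal_div]
    norm_num
  have h1s : (1 - 1/q).toReal = 1 - s := by
    rw [ENNReal.toReal_sub_of_le (h1q_le.trans (by norm_num)) (by norm_num)]
    rw [hsdef]
    norm_num
  -- apply the interpolation bound to each piece
  have hgq : eLpNorm g q μ
      ≤ ENNReal.ofReal ((C*W1) ^ (1 - θ) * (Real.sqrt (S*C) * W1) ^ θ) := by
    rw [hθdef]
    exact term_bound μ (C*W1) (Real.sqrt (S*C) * W1) (mul_nonneg hCpos.le hW10)
      (mul_nonneg (Real.sqrt_nonneg _) hW10) hg_ptw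
      (lintegral_sq_le_of_eLpNorm_two_le (mul_nonneg (Real.sqrt_nonneg _) hW10) hg_L2) hq
  have hhq : eLpNorm h q μ
      ≤ ENNReal.ofReal ((α*W2) ^ (1 - θ) * (Real.sqrt (Sp*α) * W2) ^ θ) := by
    rw [hθdef]
    exact term_bound μ (α*W2) (Real.sqrt (Sp*α) * W2) (mul_nonneg hα0 hW20)
      (mul_nonneg (Real.sqrt_nonneg _) hW20) hh_ptw
      (lintegral_sq_le_of_eLpNorm_two_le (mul_nonneg (Real.sqrt_nonneg _) hW20) hh_L2) hq
  -- triangle inequality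
  rw [hsplit]
  refine le_trans (eLpNorm_add_le hgc.aestronglyMeasurable hhc.aestronglyMeasurable hq1) ?_
  refine le_trans (add_le_add hgq hhq) ?_
  rw [← ENNReal.ofReal_add (by positivity) (by positivity)]
  refine ENNReal.ofReal_le_ofReal ?_
  rw [h1s]
  -- real-number algebra
  have hrpow_sqrt : ∀ t : ℝ, 0 ≤ t → (Real.sqrt t) ^ (2*s : ℝ) = t ^ (s : ℝ) := by
    intro t ht
    rw [Real.sqrt_eq_rpow, ← Real.rpow_mul ht]
    congr 1
    ring
  have hWpow : ∀ W : ℝ, 0 ≤ W → W ^ (1 - 2*s) * W ^ (2*s) = W := by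
    intro W hW
    rw [← Real.rpow_add' hW (by intro hcon; rw [sub_add_cancel] at hcon; exact one_ne_zero hcon),
      sub_add_cancel, Real.rpow_one]
  have e1 : (C*W1) ^ (1 - θ) * (Real.sqrt (S*C) * W1) ^ θ = C^(1-s) * S^s * W1 := by
    rw [hθs, Real.mul_rpow hCpos.le hW10, Real.mul_rpow (Real.sqrt_nonneg _) hW10,
      hrpow_sqrt _ (mul_nonneg hSpos.le hCpos.le), Real.mul_rpow hSpos.le hCpos.le]
    have hC' : C^(1-2*s) * C^s = C^(1-s) := by
      rw [← Real.rpow_add hCpos]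
      congr 1
      ring
    calc C^(1-2*s) * W1^(1-2*s) * (S^s * C^s * W1^(2*s))
        = (C^(1-2*s) * C^s) * S^s * (W1^(1-2*s) * W1^(2*s)) := by ring
      _ = C^(1-s) * S^s * W1 := by rw [hC', hWpow W1 hW10]
  have e2 : (α*W2) ^ (1 - θ) * (Real.sqrt (Sp*α) * W2) ^ θ = α^(1-s) * Sp^s * W2 := by
    rw [hθs, Real.mul_rpow hα0 hW20, Real.mul_rpow (Real.sqrt_nonneg _) hW20,
      hrpow_sqrt _ (mul_nonneg hSppos.le hα0), Real.mul_rpow hSppos.le hα0]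
    have hαexp : α^(1-2*s) * α^s = α^(1-s) := by
      have hne : (1-2*s) + s ≠ 0 := by intro hcon; nlinarith
      have hexp : (1:ℝ)-s = (1-2*s)+s := by ring
      rw [hexp, Real.rpow_add' hα0 hne]
    calc α^(1-2*s) * W2^(1-2*s) * (Sp^s * α^s * W2^(2*s))
        = (α^(1-2*s) * α^s) * Sp^s * (W2^(1-2*s) * W2^(2*s)) := by ring
      _ = α^(1-s) * Sp^s * W2 := by rw [hαexp, hWpow W2 hW20]
  rw [e1, e2]
  have hn32 : ((n:ℝ)) ^ ((3:ℝ)/2) = Real.sqrt n * n := by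
    have hnpos' : (0:ℝ) < n := Nat.cast_pos.2 hnpos
    rw [Real.sqrt_eq_rpow, show (3:ℝ)/2 = 1/2 + 1 by norm_num, Real.rpow_add hnpos',
      Real.rpow_one]
  have hn12 : ((n:ℝ)) ^ ((1:ℝ)/2) = Real.sqrt n := (Real.sqrt_eq_rpow _).symm
  rw [hn32, hn12, hW1_def, hW2_def, hDd_def]
  apply le_of_eq
  ring
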